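/- (Bhatia–Davis inequality) Let x₁,…,x_l be real numbers with min over all of them equal to a and max equal to b, and let μ = (1/l) Σⱼ xⱼ be their mean and V = (1/l) Σⱼ (xⱼ - μ)² their (population) variance. Then V ≤ (b - μ)(μ - a). -/
import Mathlib


theorem stmt_11 (l : ℕ) (hl : 0 < l) (x : Fin l → ℝ)
    (hne : (Finset.univ : Finset (Fin l)).Nonempty := ⟨⟨0, hl⟩, Finset.mem_univ _⟩)
    (a b μ V : ℝ)
    (ha : a = Finset.univ.inf' hne x) (hb : b = Finset.univ.sup' hne x)
    (hμ : μ = (∑ j, x j) / l) (hV : V = (∑ j, (x j - μ) ^ 2) / l) :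
    V ≤ (b - μ) * (μ - a) := by
  have hlR : (0 : ℝ) < l := by exact_mod_cast hl
  have hsum : (∑ j, x j) = l * μ := by
    rw [hμ]; field_simp
  have hkey : (∑ j, (x j - μ) ^ 2) ≤ l * ((b - μ) * (μ - a)) := by
    have hle : ∀ j, (x j - μ) ^ 2 ≤ ((a + b) * x j - a * b) - (2 * μ * x j - μ ^ 2) := by
      intro j
      have h1 : a ≤ x j := ha ▸ Finset.inf'_le _ (Finset.mem_univ j)
      have h2 : x j ≤ b := hb ▸ Finset.le_sup' _ (Finset.mem_univ j)
      nlinarith [mul_nonneg (sub_nonneg.2 h2) (sub_nonneg.2 h1)]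
    calc (∑ j, (x j - μ) ^ 2)
        ≤ ∑ j, (((a + b) * x j - a * b) - (2 * μ * x j - μ ^ 2)) :=
          Finset.sum_le_sum fun j _ => hle j
      _ = (a + b) * (∑ j, x j) - l * (a * b) - (2 * μ * (∑ j, x j) - l * μ ^ 2) := by
          simp [Finset.sum_sub_distrib, Finset.mul_sum, Finset.sum_sub_distrib]
      _ = l * ((b - μ) * (μ - a)) := by rw [hsum]; ring
  rw [hV]
  rw [div_le_iff₀ hlR]
  linarith [hkey]
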